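/- Let f: ℝ → ℝ be a differentiable function and x₀ ∈ ℝ. Then f is an infinitesimal similitude at x₀ (i.e., Df exists at x₀) if and only if the function |f'|: ℝ → ℝ is continuous at x₀. Moreover, when Df exists at x₀, then (Df)(x₀) = |f'(x₀)|. -/
import Mathlib


open Filter Topology

def IsInfSim {X Y : Type*} [MetricSpace X] [MetricSpace Y] (f : X → Y) (x : X) (L : ℝ) : Prop :=
  ∀ u v : ℕ → X, (∀ n, u n ≠ v n) →
    Tendsto u atTop (𝓝 x) → Tendsto v atTop (𝓝 x) →
    Tendsto (fun n => dist (f (u n)) (f (v n)) / dist (u n) (v n)) atTop (𝓝 L)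

lemma ratio_eq_abs_slope (f : ℝ → ℝ) {a b : ℝ} (hab : a ≠ b) :
    dist (f a) (f b) / dist a b = |slope f a b| := by
  rw [slope_def_field, abs_div, Real.dist_eq, Real.dist_eq, abs_sub_comm (f a) (f b),
    abs_sub_comm a b]

lemma mvt_ratio (f : ℝ → ℝ) (hf : Differentiable ℝ f) {a b : ℝ} (hab : a ≠ b) :
    ∃ c, |deriv f c| = dist (f a) (f b) / dist a b ∧ ∀ z, dist c z ≤ max (dist a z) (dist b z) := by
  suffices H : ∀ a b : ℝ, a < b →
      ∃ c, |deriv f c| = dist (f a) (f b) / dist a b ∧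
        ∀ z, dist c z ≤ max (dist a z) (dist b z) by
    rcases hab.lt_or_gt with h | h
    · exact H a b h
    · obtain ⟨c, h1, h2⟩ := H b a h
      exact ⟨c, by rwa [dist_comm (f b) (f a), dist_comm b a] at h1,
        fun z => (h2 z).trans (le_of_eq (max_comm _ _))⟩
  intro a b h
  obtain ⟨c, hc, hceq⟩ := exists_deriv_eq_slope f h hf.continuous.continuousOn
    hf.differentiableOn
  refine ⟨c, ?_, ?_⟩
  · rw [hceq, abs_div, Real.dist_eq, Real.dist_eq, abs_sub_comm (f a) (f b), abs_sub_comm a b]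
  · intro z
    rw [Real.dist_eq, Real.dist_eq, Real.dist_eq, abs_le]
    constructor
    · have h1 : -|a - z| ≤ a - z := neg_abs_le _
      have h2 : |a - z| ≤ max |a - z| |b - z| := le_max_left _ _
      have := hc.1
      linarith
    · have h1 : b - z ≤ |b - z| := le_abs_self _
      have h2 : |b - z| ≤ max |a - z| |b - z| := le_max_right _ _
      have := hc.2
      linarith

theorem stmt4 (f : ℝ → ℝ) (hf : Differentiable ℝ f) (x₀ : ℝ) :
    ((∃ L : ℝ, IsInfSim f x₀ L) ↔ ContinuousAt (fun x => |deriv f x|) x₀) ∧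
    (∀ L : ℝ, IsInfSim f x₀ L → L = |deriv f x₀|) := by
  -- uniqueness of the value
  have key : ∀ L : ℝ, IsInfSim f x₀ L → L = |deriv f x₀| := by
    intro L hL
    set u : ℕ → ℝ := fun n => x₀ + 1 / (n + 1) with hu_def
    set v : ℕ → ℝ := fun _ => x₀ with hv_def
    have hpos : ∀ n : ℕ, (0 : ℝ) < 1 / (n + 1) := fun n => by positivity
    have hne : ∀ n, u n ≠ v n := fun n => by
      simp only [hu_def, hv_def]
      intro h
      have := hpos n
      have h' : (1 : ℝ) / (n + 1) = 0 := by linarith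
      linarith
    have hone : Tendsto (fun n : ℕ => 1 / (n + 1 : ℝ)) atTop (𝓝 0) :=
      tendsto_one_div_add_atTop_nhds_zero_nat
    have hu : Tendsto u atTop (𝓝 x₀) := by
      have := hone.const_add x₀
      rw [hu_def]
      simpa using this
    have hv : Tendsto v atTop (𝓝 x₀) := tendsto_const_nhds
    have hd := (hf x₀).hasDerivAt
    rw [hasDerivAt_iff_tendsto_slope] at hd
    have hu' : Tendsto u atTop (𝓝[≠] x₀) := by
      refine tendsto_nhdsWithin_of_tendsto_nhds_of_eventually_within u hu ?_
      exact Eventually.of_forall fun n => by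
        simp only [Set.mem_compl_iff, Set.mem_singleton_iff]
        exact hne n
    have habs : Tendsto (fun n => |slope f x₀ (u n)|) atTop (𝓝 |deriv f x₀|) :=
      (continuous_abs.tendsto _).comp (hd.comp hu')
    have heq : ∀ n, dist (f (u n)) (f (v n)) / dist (u n) (v n) = |slope f x₀ (u n)| := by
      intro n
      rw [ratio_eq_abs_slope f (hne n), slope_comm]
    exact tendsto_nhds_unique (hL u v hne hu hv) (habs.congr fun n => (heq n).symm)
  refine ⟨⟨?_, ?_⟩, key⟩
  · -- IsInfSim → continuity of |deriv f|
    rintro ⟨L, hL⟩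
    have hLeq := key L hL
    rw [ContinuousAt, tendsto_iff_seq_tendsto]
    intro x hx
    have H : ∀ n : ℕ, ∃ y : ℝ, y ≠ x n ∧ dist y (x n) < 1 / (n + 1) ∧
        |(|slope f (x n) y| - |deriv f (x n)|)| < 1 / (n + 1) := by
      intro n
      have hpos : (0 : ℝ) < 1 / (n + 1) := by positivity
      have hdn := (hf (x n)).hasDerivAt
      rw [hasDerivAt_iff_tendsto_slope] at hdn
      have habs : Tendsto (fun y => |slope f (x n) y|) (𝓝[≠] (x n)) (𝓝 |deriv f (x n)|) :=
        (continuous_abs.tendsto _).comp hdn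
      have h1 : ∀ᶠ y in 𝓝[≠] (x n), |(|slope f (x n) y| - |deriv f (x n)|)| < 1 / (n + 1) := by
        have := Metric.tendsto_nhds.1 habs (1 / (n + 1)) hpos
        simpa [Real.dist_eq] using this
      have h2 : ∀ᶠ y in 𝓝[≠] (x n), dist y (x n) < 1 / (n + 1) := by
        have : ∀ᶠ y in 𝓝 (x n), dist y (x n) < 1 / (n + 1) := by
          filter_upwards [Metric.ball_mem_nhds (x n) hpos] with y hy
          exact Metric.mem_ball.1 hy
        exact this.filter_mono nhdsWithin_le_nhds
      have h3 : ∀ᶠ y in 𝓝[≠] (x n), y ≠ x n := by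
        filter_upwards [self_mem_nhdsWithin] with y hy
        exact hy
      obtain ⟨y, ⟨hy1, hy2⟩, hy3⟩ := ((h3.and h2).and h1).exists
      exact ⟨y, hy1, hy2, hy3⟩
    choose y hy1 hy2 hy3 using H
    have hne : ∀ n, x n ≠ y n := fun n => (hy1 n).symm
    have hone : Tendsto (fun n : ℕ => 1 / (n + 1 : ℝ)) atTop (𝓝 0) :=
      tendsto_one_div_add_atTop_nhds_zero_nat
    have hy : Tendsto y atTop (𝓝 x₀) := by
      rw [tendsto_iff_dist_tendsto_zero]
      refine squeeze_zero (g := fun n : ℕ => 1 / (n + 1 : ℝ) + dist (x n) x₀)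
        (fun n => dist_nonneg) (fun n => ?_) ?_
      · exact (dist_triangle (y n) (x n) x₀).trans
          (add_le_add (le_of_lt (hy2 n)) (le_refl _))
      · have := hone.add (tendsto_iff_dist_tendsto_zero.1 hx)
        simpa using this
    have hr := hL x y hne hx hy
    -- ratio n = |slope f (x n) (y n)|
    have hreq : ∀ n, dist (f (x n)) (f (y n)) / dist (x n) (y n) = |slope f (x n) (y n)| :=
      fun n => ratio_eq_abs_slope f (hne n)
    have hdiff : Tendsto
        (fun n => |deriv f (x n)| - dist (f (x n)) (f (y n)) / dist (x n) (y n))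
        atTop (𝓝 0) := by
      refine squeeze_zero_norm (fun n => ?_) hone
      rw [hreq n]
      have := hy3 n
      rw [Real.norm_eq_abs, abs_sub_comm]
      exact le_of_lt this
    have := hdiff.add hr
    simp only [sub_add_cancel, zero_add] at this
    show Tendsto (fun n => |deriv f (x n)|) atTop (𝓝 |deriv f x₀|)
    rw [← hLeq]
    exact this
  · -- continuity → IsInfSim
    intro hc
    refine ⟨|deriv f x₀|, ?_⟩
    intro u v hne hu hv
    choose c hc1 hc2 using fun n => mvt_ratio f hf (hne n)
    have hctend : Tendsto c atTop (𝓝 x₀) := by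
      rw [tendsto_iff_dist_tendsto_zero]
      refine squeeze_zero (fun n => dist_nonneg) (fun n => hc2 n x₀) ?_
      have := (tendsto_iff_dist_tendsto_zero.1 hu).max (tendsto_iff_dist_tendsto_zero.1 hv)
      simpa using this
    have := hc.tendsto.comp hctend
    exact this.congr fun n => hc1 n
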